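/- Let (A,B,C,D) be a discrete-time LTI system with state dimension n, input dimension m, output dimension p, and let Π ∈ ℝ^{(m+p)×(m+p)} be symmetric. Define the finite-horizon impulse-response matrix 𝒯_L ∈ ℝ^{Lp×Lm} as the lower block-triangular matrix with block entry D on the block diagonal, block entry C·A^{i−j−1}·B in block row i and block column j for i > j, and zero blocks above the diagonal. Then the system is L-dissipative with respect to Π if and only if the matrix [I_{Lm}; 𝒯_L]ᵀ Π_L [I_{Lm}; 𝒯_L] is positive semidefinite. -/

import Mathlib

open Matrix

/-- Finite-horizon impulse-response (block lower-triangular Toeplitz) matrix `𝒯_L`: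
block `D` on the diagonal, block `C A^(i-j-1) B` below the diagonal, zero above. -/
noncomputable def impRespMat {n m p : ℕ} (A : Matrix (Fin n) (Fin n) ℝ)
    (B : Matrix (Fin n) (Fin m) ℝ) (C : Matrix (Fin p) (Fin n) ℝ)
    (D : Matrix (Fin p) (Fin m) ℝ) (L : ℕ) :
    Matrix (Fin L × Fin p) (Fin L × Fin m) ℝ :=
  fun r c =>
    if (r.1 : ℕ) = (c.1 : ℕ) then D r.2 c.2
    else if (c.1 : ℕ) < (r.1 : ℕ) then (C * A ^ ((r.1 : ℕ) - (c.1 : ℕ) - 1) * B) r.2 c.2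
    else 0

/-- `Π_L = [[I_L ⊗ Q, I_L ⊗ S], [I_L ⊗ Sᵀ, I_L ⊗ R]]` for `Π = [[Q, S], [Sᵀ, R]]`,
acting on stacked input-output vectors. -/
def kronPi {m p L : ℕ} (P : Matrix (Fin m ⊕ Fin p) (Fin m ⊕ Fin p) ℝ) :
    Matrix ((Fin L × Fin m) ⊕ (Fin L × Fin p)) ((Fin L × Fin m) ⊕ (Fin L × Fin p)) ℝ :=
  fun r c =>
    if Sum.elim Prod.fst Prod.fst r = Sum.elim Prod.fst Prod.fst c then
      P (Sum.map Prod.snd Prod.snd r) (Sum.map Prod.snd Prod.snd c)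
    else 0

/-- The system `(A, B, C, D)` is `L`-dissipative with respect to the supply rate `Π`:
every length-`L` trajectory with zero initial state has nonnegative total supply. -/
def LDissipative {n m p : ℕ} (A : Matrix (Fin n) (Fin n) ℝ) (B : Matrix (Fin n) (Fin m) ℝ)
    (C : Matrix (Fin p) (Fin n) ℝ) (D : Matrix (Fin p) (Fin m) ℝ) (L : ℕ)
    (P : Matrix (Fin m ⊕ Fin p) (Fin m ⊕ Fin p) ℝ) : Prop :=
  ∀ (u : Fin L → Fin m → ℝ) (y : Fin L → Fin p → ℝ) (x : Fin (L + 1) → Fin n → ℝ),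
    x 0 = 0 →
    (∀ k : Fin L,
      x k.succ = A.mulVec (x k.castSucc) + B.mulVec (u k) ∧
      y k = C.mulVec (x k.castSucc) + D.mulVec (u k)) →
    0 ≤ ∑ k : Fin L, Sum.elim (u k) (y k) ⬝ᵥ P.mulVec (Sum.elim (u k) (y k))

variable {n m p L : ℕ}


lemma kronPi_mulVec (P : Matrix (Fin m ⊕ Fin p) (Fin m ⊕ Fin p) ℝ)
    (u : Fin L → Fin m → ℝ) (y : Fin L → Fin p → ℝ) :
    (kronPi P).mulVec
      (Sum.elim (fun km : Fin L × Fin m => u km.1 km.2) (fun kp : Fin L × Fin p => y kp.1 kp.2)) =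
    Sum.elim (fun km : Fin L × Fin m => P.mulVec (Sum.elim (u km.1) (y km.1)) (Sum.inl km.2))
      (fun kp : Fin L × Fin p => P.mulVec (Sum.elim (u kp.1) (y kp.1)) (Sum.inr kp.2)) := by
  funext r
  cases r with
  | inl km =>
    obtain ⟨k, i⟩ := km
    simp [mulVec, dotProduct, kronPi, Fintype.sum_sum_type, Fintype.sum_prod_type,
      ite_mul, Finset.sum_ite_eq, Finset.sum_ite_eq']
    congr 1 <;> rw [Finset.sum_eq_single k (fun b _ hb => by simp [Ne.symm hb]) (by simp)] <;> simp
  | inr kp =>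
    obtain ⟨k, i⟩ := kp
    simp [mulVec, dotProduct, kronPi, Fintype.sum_sum_type, Fintype.sum_prod_type,
      ite_mul, Finset.sum_ite_eq, Finset.sum_ite_eq']
    congr 1 <;> rw [Finset.sum_eq_single k (fun b _ hb => by simp [Ne.symm hb]) (by simp)] <;> simp


lemma kronPi_quad (P : Matrix (Fin m ⊕ Fin p) (Fin m ⊕ Fin p) ℝ)
    (u : Fin L → Fin m → ℝ) (y : Fin L → Fin p → ℝ) :
    (Sum.elim (fun km : Fin L × Fin m => u km.1 km.2) (fun kp : Fin L × Fin p => y kp.1 kp.2)) ⬝ᵥ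
      (kronPi P).mulVec
        (Sum.elim (fun km : Fin L × Fin m => u km.1 km.2)
          (fun kp : Fin L × Fin p => y kp.1 kp.2)) =
    ∑ k : Fin L, Sum.elim (u k) (y k) ⬝ᵥ P.mulVec (Sum.elim (u k) (y k)) := by
  rw [kronPi_mulVec]
  simp only [dotProduct, Fintype.sum_sum_type, Sum.elim_inl, Sum.elim_inr,
    Fintype.sum_prod_type, Finset.sum_add_distrib]


lemma traj_state (A : Matrix (Fin n) (Fin n) ℝ) (B : Matrix (Fin n) (Fin m) ℝ)
    (u : Fin L → Fin m → ℝ) (x : Fin (L + 1) → Fin n → ℝ) (h0 : x 0 = 0)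
    (hx : ∀ k : Fin L, x k.succ = A.mulVec (x k.castSucc) + B.mulVec (u k)) :
    ∀ (k : ℕ) (hk : k ≤ L), x ⟨k, Nat.lt_succ_of_le hk⟩ =
      fun t => ∑ j : Fin L,
        if (j : ℕ) < k then ((A ^ (k - (j : ℕ) - 1)) * B).mulVec (u j) t else 0 := by
  intro k
  induction k with
  | zero =>
    intro hk
    funext t
    simp [show (⟨0, Nat.lt_succ_of_le hk⟩ : Fin (L+1)) = 0 from rfl, h0]
  | succ k ih =>
    intro hk
    have hkL : k < L := hk
    have hs := hx ⟨k, hkL⟩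
    have hsucc : (⟨k, hkL⟩ : Fin L).succ = ⟨k + 1, Nat.lt_succ_of_le hk⟩ := rfl
    have hcast : (⟨k, hkL⟩ : Fin L).castSucc = ⟨k, Nat.lt_succ_of_le (le_of_lt hkL)⟩ := rfl
    rw [hsucc, hcast, ih (le_of_lt hkL)] at hs
    rw [hs]
    funext t
    have key : ∀ j : Fin L,
        (if (j : ℕ) < k + 1 then ((A ^ (k + 1 - (j : ℕ) - 1)) * B).mulVec (u j) t else 0)
          = (if (j : ℕ) < k then (A * ((A ^ (k - (j : ℕ) - 1)) * B)).mulVec (u j) t else 0)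
            + (if j = ⟨k, hkL⟩ then B.mulVec (u j) t else 0) := by
      intro j
      rcases lt_trichotomy (j : ℕ) k with h | h | h
      · have h1 : (j : ℕ) < k + 1 := by omega
        have hne : j ≠ ⟨k, hkL⟩ := by
          intro e; rw [e] at h; simp at h
        rw [if_pos h1, if_pos h, if_neg hne, add_zero]
        have he : k + 1 - (j : ℕ) - 1 = (k - (j : ℕ) - 1) + 1 := by omega
        rw [he, pow_succ', Matrix.mul_assoc]
      · have h1 : (j : ℕ) < k + 1 := by omega
        have heq : j = ⟨k, hkL⟩ := Fin.ext h
        rw [if_pos h1, if_neg (by omega), if_pos heq, zero_add]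
        have he : k + 1 - (j : ℕ) - 1 = 0 := by omega
        rw [he, pow_zero, Matrix.one_mul]
      · have hne : j ≠ ⟨k, hkL⟩ := by
          intro e; rw [e] at h; simp at h
        rw [if_neg (by omega), if_neg (by omega), if_neg hne]
        simp
    rw [Finset.sum_congr rfl (fun j _ => key j), Finset.sum_add_distrib,
      Finset.sum_ite_eq' Finset.univ (⟨k, hkL⟩ : Fin L)]
    simp only [Finset.mem_univ, if_pos, Pi.add_apply]
    congr 1
    show (fun s => A t s) ⬝ᵥ _ = _
    simp only [dotProduct, Finset.mul_sum, mul_ite, mul_zero]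
    rw [Finset.sum_comm]
    refine Finset.sum_congr rfl fun j _ => ?_
    split_ifs with hj
    · conv_rhs => rw [← Matrix.mulVec_mulVec]
      rfl
    · simp


lemma traj_output (A : Matrix (Fin n) (Fin n) ℝ) (B : Matrix (Fin n) (Fin m) ℝ)
    (C : Matrix (Fin p) (Fin n) ℝ) (D : Matrix (Fin p) (Fin m) ℝ)
    (u : Fin L → Fin m → ℝ) (x : Fin (L + 1) → Fin n → ℝ) (h0 : x 0 = 0)
    (hx : ∀ k : Fin L, x k.succ = A.mulVec (x k.castSucc) + B.mulVec (u k)) (k : Fin L) :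
    C.mulVec (x k.castSucc) + D.mulVec (u k) =
      fun i => ∑ c : Fin L × Fin m, impRespMat A B C D L (k, i) c * u c.1 c.2 := by
  have hst := traj_state A B u x h0 hx k (le_of_lt k.2)
  have hcast : k.castSucc = ⟨(k : ℕ), Nat.lt_succ_of_le (le_of_lt k.2)⟩ := Fin.ext rfl
  rw [hcast, hst]
  funext i
  rw [Fintype.sum_prod_type]
  have key : ∀ j : Fin L,
      (∑ l : Fin m, impRespMat A B C D L (k, i) (j, l) * u j l)
        = (if (j : ℕ) < (k : ℕ) then
            ((C * ((A ^ ((k : ℕ) - (j : ℕ) - 1)) * B)).mulVec (u j)) i else 0)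
          + (if j = k then (D.mulVec (u j)) i else 0) := by
    intro j
    rcases lt_trichotomy (j : ℕ) (k : ℕ) with h | h | h
    · have hne : j ≠ k := by intro e; rw [e] at h; omega
      rw [if_pos h, if_neg hne, add_zero]
      simp only [impRespMat, if_neg (by omega : ¬ ((k:ℕ) = (j:ℕ))), if_pos h]
      rw [← Matrix.mul_assoc]
      rfl
    · have heq : j = k := Fin.ext h
      rw [if_neg (by omega), if_pos heq, zero_add, heq]
      simp only [impRespMat, if_pos rfl]
      rfl
    · have hne : j ≠ k := by intro e; rw [e] at h; omega
      rw [if_neg (by omega), if_neg hne, add_zero]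
      simp only [impRespMat, if_neg (by omega : ¬ ((k:ℕ) = (j:ℕ))),
        if_neg (by omega : ¬ ((j:ℕ) < (k:ℕ)))]
      simp
  rw [Finset.sum_congr rfl (fun j _ => key j), Finset.sum_add_distrib,
    Finset.sum_ite_eq' Finset.univ k]
  simp only [Finset.mem_univ, if_pos, Pi.add_apply]
  congr 1
  show (fun s => C i s) ⬝ᵥ _ = _
  simp only [dotProduct, Finset.mul_sum, mul_ite, mul_zero]
  rw [Finset.sum_comm]
  refine Finset.sum_congr rfl fun j _ => ?_
  split_ifs with hj
  · conv_rhs => rw [← Matrix.mulVec_mulVec]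
    rfl
  · simp


lemma kronPi_isSymm {P : Matrix (Fin m ⊕ Fin p) (Fin m ⊕ Fin p) ℝ} (hP : P.IsSymm) :
    (kronPi (L := L) P).IsSymm := by
  unfold Matrix.IsSymm
  funext r c
  simp only [transpose_apply, kronPi]
  by_cases h : Sum.elim Prod.fst Prod.fst r = Sum.elim Prod.fst Prod.fst c
  · rw [if_pos h, if_pos h.symm]
    exact hP.apply _ _
  · rw [if_neg h, if_neg (fun e => h e.symm)]

/-- **Model-based `L`-dissipativity test.** The LTI system `(A, B, C, D)` is
`L`-dissipative with respect to the symmetric supply rate `Π` if and only if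
`[I; 𝒯_L]ᵀ Π_L [I; 𝒯_L] ⪰ 0`. -/
theorem lDissipative_iff_posSemidef {n m p L : ℕ}
    (A : Matrix (Fin n) (Fin n) ℝ) (B : Matrix (Fin n) (Fin m) ℝ)
    (C : Matrix (Fin p) (Fin n) ℝ) (D : Matrix (Fin p) (Fin m) ℝ)
    (P : Matrix (Fin m ⊕ Fin p) (Fin m ⊕ Fin p) ℝ) (hP : P.IsSymm) :
    LDissipative A B C D L P ↔
      ((fromRows (1 : Matrix (Fin L × Fin m) (Fin L × Fin m) ℝ) (impRespMat A B C D L))ᵀ *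
          kronPi (L := L) P *
          fromRows (1 : Matrix (Fin L × Fin m) (Fin L × Fin m) ℝ)
            (impRespMat A B C D L)).PosSemidef := by
  set T := impRespMat A B C D L with hT
  set N := fromRows (1 : Matrix (Fin L × Fin m) (Fin L × Fin m) ℝ) T with hN
  have hsym : (kronPi (L := L) P).IsSymm := kronPi_isSymm hP
  have hherm : (Nᵀ * kronPi (L := L) P * N).IsHermitian := by
    show (Nᵀ * kronPi (L := L) P * N).IsSymm
    unfold Matrix.IsSymm
    rw [transpose_mul, transpose_mul, transpose_transpose, hsym, Matrix.mul_assoc]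
  have hquad : ∀ v : (Fin L × Fin m) → ℝ,
      v ⬝ᵥ (Nᵀ * kronPi (L := L) P * N).mulVec v =
        (N.mulVec v) ⬝ᵥ (kronPi P).mulVec (N.mulVec v) := by
    intro v
    rw [← Matrix.mulVec_mulVec, ← Matrix.mulVec_mulVec, dotProduct_mulVec, vecMul_transpose]
  have hNv : ∀ v : (Fin L × Fin m) → ℝ,
      N.mulVec v = Sum.elim v (T.mulVec v) := by
    intro v
    rw [hN, fromRows_mulVec, one_mulVec]
  constructor
  · intro hdis
    refine posSemidef_iff_dotProduct_mulVec.2 ⟨hherm, ?_⟩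
    intro v
    have hsv : star v = v := rfl
    rw [hsv, hquad, hNv]
    set u : Fin L → Fin m → ℝ := fun k i => v (k, i) with hu
    let x' : ℕ → Fin n → ℝ := fun k =>
      Nat.rec (0 : Fin n → ℝ)
        (fun k xk => A.mulVec xk + B.mulVec (if h : k < L then u ⟨k, h⟩ else 0)) k
    set x : Fin (L + 1) → Fin n → ℝ := fun k => x' k with hxdef
    set y : Fin L → Fin p → ℝ :=
      fun k => C.mulVec (x k.castSucc) + D.mulVec (u k) with hy
    have h0 : x 0 = 0 := rfl
    have hx : ∀ k : Fin L, x k.succ = A.mulVec (x k.castSucc) + B.mulVec (u k) := by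
      intro k
      show x' ((k : ℕ) + 1) = _
      simp only [x', dif_pos k.2]
      rfl
    have hrec : ∀ k : Fin L,
        x k.succ = A.mulVec (x k.castSucc) + B.mulVec (u k) ∧
        y k = C.mulVec (x k.castSucc) + D.mulVec (u k) := fun k => ⟨hx k, rfl⟩
    have hge := hdis u y x h0 hrec
    rw [← kronPi_quad] at hge
    have hueq : (fun km : Fin L × Fin m => u km.1 km.2) = v := rfl
    have hyeq : (fun kp : Fin L × Fin p => y kp.1 kp.2) = T.mulVec v := by
      funext kp
      have := traj_output A B C D u x h0 hx kp.1
      show (C.mulVec (x kp.1.castSucc) + D.mulVec (u kp.1)) kp.2 = _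
      calc (C.mulVec (x kp.1.castSucc) + D.mulVec (u kp.1)) kp.2
          = ∑ c : Fin L × Fin m, T (kp.1, kp.2) c * u c.1 c.2 := by rw [this]
        _ = T.mulVec v kp := rfl
    rw [hueq, hyeq] at hge
    exact hge
  · intro hpsd u y x h0 hrec
    set v : Fin L × Fin m → ℝ := fun c => u c.1 c.2 with hv
    have hge := (posSemidef_iff_dotProduct_mulVec.1 hpsd).2 v
    have hsv : star v = v := rfl
    rw [hsv, hquad, hNv] at hge
    rw [← kronPi_quad]
    have hueq : (fun km : Fin L × Fin m => u km.1 km.2) = v := rfl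
    have hyeq : (fun kp : Fin L × Fin p => y kp.1 kp.2) = T.mulVec v := by
      funext kp
      have h2 := (hrec kp.1).2
      have := traj_output A B C D u x h0 (fun k => (hrec k).1) kp.1
      calc y kp.1 kp.2 = (C.mulVec (x kp.1.castSucc) + D.mulVec (u kp.1)) kp.2 := by rw [h2]
        _ = ∑ c : Fin L × Fin m, T (kp.1, kp.2) c * u c.1 c.2 := by rw [this]
        _ = T.mulVec v kp := rfl
    rw [hueq, hyeq]
    exact hge
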